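/- Let B_μ (μ = 0,1,2,3) be 4×4 real orthogonal matrices satisfying B_μ B_ν + B_ν B_μ = −2 η_{μν} I for all μ,ν. Let m ≥ 0 and p ∈ ℝ³ with p ≠ 0, and set E = √(|p|² + m²), a = √((E+m)/(2E)), b = √((E−m)/(2E)), P = Σ_{k=1}^{3} p_k B_k, and G = |p|⁻¹ P B₀. Then the 8×8 block-matrix identity [[m·B₀, P],[−P, m·B₀]] · [[a·I, −b·G],[b·G, a·I]] = [[a·I, −b·G],[b·G, a·I]] · [[E·B₀, 0],[0, E·B₀]] holds; that is, the multiplier matrix of the Majorana-Fourier transform intertwines the momentum-space Dirac operator with multiplication by iγ⁰E_p. -/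

import Mathlib

open Matrix

/-- The Minkowski metric `diag(1,-1,-1,-1)` as a real 4×4 matrix. -/
noncomputable def minkowskiEta : Matrix (Fin 4) (Fin 4) ℝ :=
  Matrix.diagonal ![1, -1, -1, -1]

/-- Given real orthogonal Majorana matrices `B_μ`, a mass `m ≥ 0` and a
nonzero momentum `p ∈ ℝ³`, with `E = √(|p|²+m²)`, `a = √((E+m)/(2E))`,
`b = √((E−m)/(2E))`, `P = Σ_k p_k B_k` and `G = |p|⁻¹ P B₀`, the multiplier matrix of the
Majorana-Fourier transform intertwines the momentum-space Dirac operator with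
multiplication by `iγ⁰E_p`:
`[[m·B₀, P],[−P, m·B₀]] · [[a·I, −b·G],[b·G, a·I]] = [[a·I, −b·G],[b·G, a·I]] · [[E·B₀, 0],[0, E·B₀]]`. -/
theorem majorana_fourier_multiplier_intertwines
    (B : Fin 4 → Matrix (Fin 4) (Fin 4) ℝ)
    (horth : ∀ μ, (B μ)ᵀ * B μ = 1)
    (hB : ∀ μ ν, B μ * B ν + B ν * B μ =
      (-2 * minkowskiEta μ ν) • (1 : Matrix (Fin 4) (Fin 4) ℝ))
    (m : ℝ) (hm : 0 ≤ m) (p : Fin 3 → ℝ) (hp : p ≠ 0)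
    (E a b : ℝ) (P G : Matrix (Fin 4) (Fin 4) ℝ)
    (hE : E = Real.sqrt ((∑ k, p k ^ 2) + m ^ 2))
    (ha : a = Real.sqrt ((E + m) / (2 * E)))
    (hb : b = Real.sqrt ((E - m) / (2 * E)))
    (hP : P = ∑ k, p k • B k.succ)
    (hG : G = (Real.sqrt (∑ k, p k ^ 2))⁻¹ • (P * B 0)) :
    Matrix.fromBlocks (m • B 0) P (-P) (m • B 0) *
      Matrix.fromBlocks (a • (1 : Matrix (Fin 4) (Fin 4) ℝ)) (-(b • G)) (b • G)
        (a • (1 : Matrix (Fin 4) (Fin 4) ℝ)) =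
    Matrix.fromBlocks (a • (1 : Matrix (Fin 4) (Fin 4) ℝ)) (-(b • G)) (b • G)
        (a • (1 : Matrix (Fin 4) (Fin 4) ℝ)) *
      Matrix.fromBlocks (E • B 0) 0 0 (E • B 0) := by
  -- scalar facts
  set s2 : ℝ := ∑ k, p k ^ 2 with hs2def
  have hs2pos : 0 < s2 := by
    obtain ⟨k, hk⟩ : ∃ k, p k ≠ 0 := by
      by_contra h; push_neg at h; exact hp (funext fun k => h k)
    exact lt_of_lt_of_le (by positivity)
      (Finset.single_le_sum (fun i _ => sq_nonneg (p i)) (Finset.mem_univ k))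
  set s : ℝ := Real.sqrt s2 with hsdef
  have hspos : 0 < s := Real.sqrt_pos.mpr hs2pos
  have hss : s ^ 2 = s2 := Real.sq_sqrt hs2pos.le
  have hEpos : 0 < E := by rw [hE]; exact Real.sqrt_pos.mpr (by positivity)
  have hE2 : E ^ 2 = s2 + m ^ 2 := by rw [hE]; exact Real.sq_sqrt (by positivity)
  have hEm : m ≤ E := by nlinarith
  have ha2 : a ^ 2 = (E + m) / (2 * E) := by rw [ha]; exact Real.sq_sqrt (by positivity)
  have hb2 : b ^ 2 = (E - m) / (2 * E) := by
    rw [hb]; exact Real.sq_sqrt (div_nonneg (by linarith) (by linarith))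
  have han : 0 ≤ a := ha ▸ Real.sqrt_nonneg _
  have hbn : 0 ≤ b := hb ▸ Real.sqrt_nonneg _
  have key1 : b * s = a * (E - m) := by
    have h1 : (b * s) ^ 2 = (a * (E - m)) ^ 2 := by
      rw [mul_pow, mul_pow, ha2, hb2, hss]
      field_simp
      nlinarith [hE2]
    have h2 : 0 ≤ b * s := mul_nonneg hbn hspos.le
    have h3 : 0 ≤ a * (E - m) := mul_nonneg han (by linarith)
    calc b * s = Real.sqrt ((b * s) ^ 2) := (Real.sqrt_sq h2).symm
      _ = Real.sqrt ((a * (E - m)) ^ 2) := by rw [h1]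
      _ = a * (E - m) := Real.sqrt_sq h3
  have key2 : a * s = b * (E + m) := by
    have h1 : (a * s) ^ 2 = (b * (E + m)) ^ 2 := by
      rw [mul_pow, mul_pow, ha2, hb2, hss]
      field_simp
      nlinarith [hE2]
    have h2 : 0 ≤ a * s := mul_nonneg han hspos.le
    have h3 : 0 ≤ b * (E + m) := mul_nonneg hbn (by linarith)
    calc a * s = Real.sqrt ((a * s) ^ 2) := (Real.sqrt_sq h2).symm
      _ = Real.sqrt ((b * (E + m)) ^ 2) := by rw [h1]
      _ = b * (E + m) := Real.sqrt_sq h3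
  -- matrix facts
  have hB00 : B 0 * B 0 = -1 := by
    have h := hB 0 0
    have hη : minkowskiEta 0 0 = (1 : ℝ) := by simp [minkowskiEta]
    rw [hη] at h
    have h2 : (2 : ℝ) • (B 0 * B 0) = (2 : ℝ) • (-1 : Matrix (Fin 4) (Fin 4) ℝ) := by
      rw [two_smul]; rw [h]; ext i j; simp
    exact smul_right_injective _ (two_ne_zero) h2
  have hanti : ∀ k : Fin 3, B k.succ * B 0 = -(B 0 * B k.succ) := by
    intro k
    have h := hB k.succ 0
    have hη : minkowskiEta k.succ 0 = 0 :=
      Matrix.diagonal_apply_ne _ (Fin.succ_ne_zero k)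
    rw [hη] at h
    simp at h
    exact eq_neg_of_add_eq_zero_left h
  have hsq : ∀ k : Fin 3, B k.succ * B k.succ = 1 := by
    intro k
    have h := hB k.succ k.succ
    have hη : minkowskiEta k.succ k.succ = (-1 : ℝ) := by
      fin_cases k <;> simp [minkowskiEta]
    rw [hη] at h
    have h2 : (2 : ℝ) • (B k.succ * B k.succ) = (2 : ℝ) • (1 : Matrix (Fin 4) (Fin 4) ℝ) := by
      rw [two_smul]; rw [h]; ext i j; simp
    exact smul_right_injective _ (two_ne_zero) h2
  have hanti' : ∀ i j : Fin 3, i ≠ j → B i.succ * B j.succ = -(B j.succ * B i.succ) := by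
    intro i j hij
    have h := hB i.succ j.succ
    have hη : minkowskiEta i.succ j.succ = 0 :=
      Matrix.diagonal_apply_ne _ (fun hc => hij (Fin.succ_injective _ hc))
    rw [hη] at h
    simp at h
    exact eq_neg_of_add_eq_zero_left h
  have hPB0 : P * B 0 = -(B 0 * P) := by
    rw [hP, Finset.sum_mul, Matrix.mul_sum]
    simp only [Matrix.smul_mul, Matrix.mul_smul, hanti, smul_neg]
    rw [← Finset.sum_neg_distrib]
  have hPP : P * P = s2 • (1 : Matrix (Fin 4) (Fin 4) ℝ) := by
    rw [hP, hs2def]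
    rw [Fin.sum_univ_three, Fin.sum_univ_three]
    simp only [Matrix.add_mul, Matrix.mul_add, Matrix.smul_mul, Matrix.mul_smul]
    rw [hsq 0, hsq 1, hsq 2,
      hanti' 1 0 (by decide), hanti' 2 0 (by decide), hanti' 2 1 (by decide)]
    module
  have hPG : P * G = s • B 0 := by
    rw [hG, Matrix.mul_smul, ← Matrix.mul_assoc, hPP, Matrix.smul_mul, Matrix.one_mul,
      smul_smul]
    congr 1
    rw [← hss]
    field_simp
  have hB0G : B 0 * G = s⁻¹ • P := by
    rw [hG, Matrix.mul_smul, ← Matrix.mul_assoc]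
    congr 1
    have : B 0 * P = -(P * B 0) := by rw [hPB0]; simp
    rw [this, Matrix.neg_mul, Matrix.mul_assoc, hB00, Matrix.mul_neg, Matrix.mul_one, neg_neg]
  have hGB0 : G * B 0 = -(s⁻¹ • P) := by
    rw [hG, Matrix.smul_mul, Matrix.mul_assoc, hB00, Matrix.mul_neg, Matrix.mul_one, smul_neg]
  -- blocks
  rw [Matrix.fromBlocks_multiply, Matrix.fromBlocks_multiply, Matrix.fromBlocks_inj]
  have hs' : s ≠ 0 := hspos.ne'
  refine ⟨?_, ?_, ?_, ?_⟩
  · rw [Matrix.mul_zero, add_zero, Matrix.smul_mul, Matrix.mul_smul, Matrix.mul_one,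
      smul_smul, Matrix.mul_smul, hPG, smul_smul, Matrix.smul_mul, Matrix.one_mul, smul_smul]
    rw [show b * s = a * E - m * a from by linear_combination key1]
    module
  · simp only [Matrix.smul_mul, Matrix.mul_smul, Matrix.mul_one, Matrix.one_mul,
      Matrix.mul_zero, Matrix.zero_mul, Matrix.neg_mul, Matrix.mul_neg, zero_add, add_zero,
      neg_neg, smul_neg, hPG, hB0G, hGB0, smul_smul]
    rw [show E * (b * s⁻¹) = a - b * (m * s⁻¹) from by
      field_simp
      linarith [key2]]
    module
  · simp only [Matrix.smul_mul, Matrix.mul_smul, Matrix.mul_one, Matrix.one_mul,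
      Matrix.mul_zero, Matrix.zero_mul, Matrix.neg_mul, Matrix.mul_neg, zero_add, add_zero,
      neg_neg, smul_neg, hPG, hB0G, hGB0, smul_smul]
    rw [show E * (b * s⁻¹) = a - b * (m * s⁻¹) from by
      field_simp
      linarith [key2]]
    module
  · simp only [Matrix.smul_mul, Matrix.mul_smul, Matrix.mul_one, Matrix.one_mul,
      Matrix.mul_zero, Matrix.zero_mul, Matrix.neg_mul, Matrix.mul_neg, zero_add, add_zero,
      neg_neg, smul_neg, hPG, hB0G, hGB0, smul_smul]
    rw [show b * s = E * a - a * m from by linear_combination key1]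
    module
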